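/- For a partition λ of length at most r, GP_{δ_r+λ}(x_1,…,x_r|b) = GP_{δ_r}(x_1,…,x_r) · G_λ(x_1,…,x_r|b), where G_λ(x_1,…,x_r|b) = Σ_{w∈S_r} w( ∏_i [x_i|b]^{λ_i+r-i} / ∏_{i<j}(x_i⊖x_j) ) is the factorial Grothendieck polynomial and GP_{δ_r}(x) = x_1⋯x_r ∏_{i<j}(x_i⊕x_j). -/

import Mathlib

open Finset

private lemma aux_filter_prod {M : Type*} [CommMonoid M] {n : ℕ} (f : Fin n → Fin n → M) :
    ∏ p ∈ (univ ×ˢ univ : Finset (Fin n × Fin n)).filter (fun p => p.1 < p.2), f p.1 p.2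
      = ∏ i, ∏ j ∈ Ioi i, f i j := by
  rw [Finset.prod_filter, Finset.prod_product]
  refine Finset.prod_congr rfl fun i _ => ?_
  rw [← Finset.prod_filter]
  congr 1
  ext j; simp

private lemma aux_sym_perm {M : Type*} [CommMonoid M] {n : ℕ} (g : Fin n → Fin n → M)
    (hg : ∀ i j, g i j = g j i) (w : Equiv.Perm (Fin n)) :
    ∏ i, ∏ j ∈ Ioi i, g (w i) (w j) = ∏ i, ∏ j ∈ Ioi i, g i j := by
  rw [← aux_filter_prod (fun i j => g (w i) (w j)), ← aux_filter_prod g]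
  refine Finset.prod_nbij' (fun p => if w p.1 < w p.2 then (w p.1, w p.2) else (w p.2, w p.1))
    (fun p => if w⁻¹ p.1 < w⁻¹ p.2 then (w⁻¹ p.1, w⁻¹ p.2) else (w⁻¹ p.2, w⁻¹ p.1))
    ?_ ?_ ?_ ?_ ?_
  · intro p hp
    simp only [mem_filter, mem_product, mem_univ, true_and] at hp ⊢
    split_ifs with h
    · exact h
    · rcases lt_trichotomy (w p.1) (w p.2) with h' | h' | h'
      · exact absurd h' h
      · exact absurd (w.injective h') hp.ne
      · exact h'
  · intro p hp
    simp only [mem_filter, mem_product, mem_univ, true_and] at hp ⊢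
    split_ifs with h
    · exact h
    · rcases lt_trichotomy (w⁻¹ p.1) (w⁻¹ p.2) with h' | h' | h'
      · exact absurd h' h
      · exact absurd (w⁻¹.injective h') hp.ne
      · exact h'
  · intro p hp
    simp only [mem_filter, mem_product, mem_univ, true_and] at hp
    split_ifs with h h2 h3 <;>
      simp_all [Equiv.Perm.inv_def, Equiv.symm_apply_apply, hp.not_gt, le_of_lt hp]
  · intro p hp
    simp only [mem_filter, mem_product, mem_univ, true_and] at hp
    split_ifs with h h2 h3 <;>
      simp_all [Equiv.Perm.inv_def, Equiv.apply_symm_apply, hp.not_gt, le_of_lt hp]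
  · intro p hp
    split_ifs with h
    · rfl
    · exact hg (w p.1) (w p.2)

/-- For a partition `λ` of length at most `r`,
`GP_{δ_r+λ}(x₁,…,x_r|b) = GP_{δ_r}(x₁,…,x_r) · G_λ(x₁,…,x_r|b)`, where
`G_λ(x|b) = Σ_{w∈S_r} w(∏_i [x_i|b]^{λ_i+r-i} / ∏_{i<j}(x_i⊖x_j))` is the factorial
Grothendieck polynomial and `GP_{δ_r}(x) = x₁⋯x_r ∏_{i<j}(x_i⊕x_j)`.
Here `(δ_r+λ)_i = λ_i + r - i + 1` (1-indexed), so the GP-factorial exponent is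
`λ_i + r - i` (1-indexed), i.e. `λ i + (r - 1 - i)` with 0-indexed `i : Fin r`. -/
theorem stmt_3 {K : Type*} [Field K] (r : ℕ) (β : K) (x : Fin r → K) (b : ℕ → K)
    (lam : Fin r → ℕ) (hlam : Antitone lam)
    (hx : Function.Injective x)
    (hxu : ∀ i, 1 + β * x i ≠ 0) (hbu : ∀ j, 1 + β * b j ≠ 0) :
    ∑ w : Equiv.Perm (Fin r),
      ((∏ i : Fin r, (x (w i) *
          ∏ k ∈ Finset.range (lam i + (r - 1 - (i : ℕ))),
            ((x (w i) - b k) / (1 + β * b k)))) *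
        ∏ i : Fin r, ∏ j ∈ Finset.Ioi i,
          ((x (w i) + x (w j) + β * x (w i) * x (w j)) /
            ((x (w i) - x (w j)) / (1 + β * x (w j))))) =
    ((∏ i : Fin r, x i) * ∏ i : Fin r, ∏ j ∈ Finset.Ioi i,
        (x i + x j + β * x i * x j)) *
      ∑ w : Equiv.Perm (Fin r),
        (∏ i : Fin r, ∏ k ∈ Finset.range (lam i + (r - 1 - (i : ℕ))),
            ((x (w i) - b k) / (1 + β * b k))) /
          ∏ i : Fin r, ∏ j ∈ Finset.Ioi i,
            ((x (w i) - x (w j)) / (1 + β * x (w j))) := by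
  rw [Finset.mul_sum]
  refine Finset.sum_congr rfl fun w _ => ?_
  have hsym : ∏ i : Fin r, ∏ j ∈ Ioi i,
      (x (w i) + x (w j) + β * x (w i) * x (w j)) =
      ∏ i : Fin r, ∏ j ∈ Ioi i, (x i + x j + β * x i * x j) :=
    aux_sym_perm (fun i j => x i + x j + β * x i * x j) (fun i j => by ring) w
  have hdiv : ∏ i : Fin r, ∏ j ∈ Ioi i,
      ((x (w i) + x (w j) + β * x (w i) * x (w j)) /
        ((x (w i) - x (w j)) / (1 + β * x (w j)))) =
      (∏ i : Fin r, ∏ j ∈ Ioi i, (x (w i) + x (w j) + β * x (w i) * x (w j))) /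
      ∏ i : Fin r, ∏ j ∈ Ioi i, ((x (w i) - x (w j)) / (1 + β * x (w j))) := by
    simp [Finset.prod_div_distrib]
  rw [hdiv, hsym, Finset.prod_mul_distrib, Equiv.prod_comp w x]
  ring
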